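/- Let 0 < R ≤ 1 and α ∈ Dom_R, so that Li_α(z) := Σ_{n≥0} Li_{α,n}(z) is analytic on |z| < R, and define H_α(N) by the Taylor expansion Li_α(z)/(1−z) = Σ_{N≥0} H_α(N)·z^N for |z| < R. Then for every r ∈ (0,R), Σ_{n,N≥0} |H_{α,n}(N)|·r^N < ∞; in particular, for every N ∈ ℕ, the series Σ_{n≥0} H_{α,n}(N) converges absolutely and its sum equals H_α(N). -/

import Mathlib

open scoped NNReal ENNReal
open scoped Real

/-- A composition: a finite list of positive integers. -/
abbrev Comp := List ℕ+

/-- Harmonic sum `H_s(N) = Σ_{N ≥ n₁ > … > n_r > 0} 1/(n₁^{s₁} ⋯ n_r^{s_r})`,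
with `H_ε(N) = 1`. -/
noncomputable def Hc : Comp → ℕ → ℂ
  | [], _ => 1
  | s :: u, N => ∑ n ∈ Finset.Icc 1 N, ((n : ℂ) ^ (s : ℕ))⁻¹ * Hc u (n - 1)

/-- Polylogarithm `Li_s(z) = Σ_{n₁ > … > n_r > 0} z^{n₁}/(n₁^{s₁} ⋯ n_r^{s_r})`,
with `Li_ε = 1` (the `n = 0` term of the `tsum` vanishes since `s ≥ 1`). -/
noncomputable def LiC : Comp → ℂ → ℂ
  | [], _ => 1
  | s :: u, z => ∑' n : ℕ, z ^ n * ((n : ℂ) ^ (s : ℕ))⁻¹ * Hc u (n - 1)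

/-- Weight of a composition. -/
def wt (s : Comp) : ℕ := (s.map fun p => (p : ℕ)).sum

/-- `Li_P(z) = Σ_s P(s)·Li_s(z)` for a (finitely supported) function `P` on
compositions. -/
noncomputable def LiP (P : Comp → ℂ) (z : ℂ) : ℂ := ∑' s : Comp, P s * LiC s z

/-- `H_P(N) = Σ_s P(s)·H_s(N)` for a (finitely supported) function `P` on
compositions. -/
noncomputable def HP (P : Comp → ℂ) (N : ℕ) : ℂ := ∑' s : Comp, P s * Hc s N

/-- Weight-`n` homogeneous component of a function on compositions. -/
def homog (α : Comp → ℂ) (n : ℕ) : Comp → ℂ := fun s => if wt s = n then α s else 0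

/-- `Dom_R`: the set of `α` with `Σ_n sup_{|z|≤r} |Li_{α,n}(z)| < ∞` for every
`r ∈ (0,R)`. -/
noncomputable def DomR (R : ℝ) : Set (Comp → ℂ) :=
  {α | ∀ r : ℝ, 0 < r → r < R →
    (∑' n : ℕ, ⨆ z ∈ Metric.closedBall (0 : ℂ) r, (‖LiP (homog α n) z‖₊ : ℝ≥0∞)) < ⊤}

lemma Hc_norm_le (s : Comp) (N : ℕ) : ‖Hc s N‖ ≤ (N + 1 : ℝ) ^ s.length := by
  induction s generalizing N with
  | nil => simp [Hc]
  | cons a u ih =>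
    rw [Hc]
    refine (norm_sum_le _ _).trans ?_
    have h1 : ∀ n ∈ Finset.Icc 1 N, ‖((n : ℂ) ^ (a : ℕ))⁻¹ * Hc u (n - 1)‖ ≤
        (N + 1 : ℝ) ^ u.length := by
      intro n hn
      rw [Finset.mem_Icc] at hn
      rw [norm_mul]
      have h2 : ‖((n : ℂ) ^ (a : ℕ))⁻¹‖ ≤ 1 := by
        rw [norm_inv, norm_pow, Complex.norm_natCast]
        exact inv_le_one_of_one_le₀ (one_le_pow₀ (by exact_mod_cast hn.1))
      have h3 : ‖Hc u (n - 1)‖ ≤ (N + 1 : ℝ) ^ u.length := by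
        refine (ih (n - 1)).trans ?_
        apply pow_le_pow_left₀ (by positivity)
        have : (n - 1 : ℕ) ≤ N := by omega
        exact_mod_cast Nat.add_le_add_right this 1
      calc ‖((n : ℂ) ^ (a : ℕ))⁻¹‖ * ‖Hc u (n - 1)‖
          ≤ 1 * ((N + 1 : ℝ) ^ u.length) := by
            exact mul_le_mul h2 h3 (norm_nonneg _) zero_le_one
        _ = (N + 1 : ℝ) ^ u.length := one_mul _
    refine (Finset.sum_le_sum h1).trans ?_
    rw [Finset.sum_const, Nat.card_Icc]
    simp only [List.length_cons, nsmul_eq_mul, pow_succ]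
    have h4 : ((N + 1 - 1 : ℕ) : ℝ) ≤ (N : ℝ) + 1 := by
      have : (N + 1 - 1 : ℕ) ≤ N + 1 := by omega
      exact_mod_cast this
    calc ((N + 1 - 1 : ℕ) : ℝ) * (N + 1 : ℝ) ^ u.length
        ≤ ((N:ℝ) + 1) * (N + 1 : ℝ) ^ u.length :=
          mul_le_mul_of_nonneg_right h4 (by positivity)
      _ = (N + 1 : ℝ) ^ u.length * ((N:ℝ) + 1) := mul_comm _ _

lemma LiC_term_norm_le (a : ℕ+) (u : Comp) (z : ℂ) (n : ℕ) :
    ‖z ^ n * ((n : ℂ) ^ (a : ℕ))⁻¹ * Hc u (n - 1)‖ ≤ ((n:ℝ) + 1) ^ u.length * ‖z‖ ^ n := by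
  cases n with
  | zero =>
    have h0 : ((0 : ℕ) : ℂ) ^ (a : ℕ) = 0 := by
      rw [Nat.cast_zero]; exact zero_pow a.ne_zero
    simp [h0]
  | succ m =>
    rw [norm_mul, norm_mul, norm_pow, norm_inv]
    have h2 : ‖(((m+1 : ℕ) : ℂ)) ^ (a : ℕ)‖⁻¹ ≤ 1 := by
      rw [norm_pow, Complex.norm_natCast]
      exact inv_le_one_of_one_le₀ (one_le_pow₀ (by exact_mod_cast Nat.succ_le_succ (Nat.zero_le m)))
    have h3 : ‖Hc u (m + 1 - 1)‖ ≤ ((m:ℝ) + 1 + 1) ^ u.length := by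
      refine (Hc_norm_le u (m + 1 - 1)).trans ?_
      apply pow_le_pow_left₀ (by positivity)
      have : ((m + 1 - 1 : ℕ) : ℝ) = (m : ℝ) := by norm_num
      rw [this]; linarith
    calc ‖z‖ ^ (m+1) * ‖((m+1:ℕ) : ℂ) ^ (a:ℕ)‖⁻¹ * ‖Hc u (m+1-1)‖
        ≤ ‖z‖ ^ (m+1) * 1 * (((m:ℝ) + 1 + 1)) ^ u.length := by
          refine mul_le_mul (mul_le_mul_of_nonneg_left h2 (by positivity)) h3 (norm_nonneg _) ?_
          positivity
      _ = (((m:ℕ):ℝ) + 1 + 1) ^ u.length * ‖z‖ ^ (m+1) := by ring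
      _ = (((m+1:ℕ):ℝ) + 1) ^ u.length * ‖z‖ ^ (m+1) := by push_cast; ring_nf

lemma summable_aux {r : ℝ} (hr0 : 0 ≤ r) (hr : r < 1) (k : ℕ) :
    Summable fun n : ℕ => ((n:ℝ) + 1) ^ k * r ^ n := by
  rcases eq_or_lt_of_le hr0 with h | h
  · apply summable_of_ne_finset_zero (s := {0})
    intro n hn
    rw [← h, zero_pow (by simpa using hn), mul_zero]
  · have h1 : Summable fun n : ℕ => (n:ℝ) ^ k * r ^ n :=
      summable_pow_mul_geometric_of_norm_lt_one k (by rwa [Real.norm_of_nonneg hr0])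
    have h2 : Summable ((fun n : ℕ => (n:ℝ) ^ k * r ^ n) ∘ (fun n => n + 1)) :=
      h1.comp_injective (add_left_injective 1)
    have h3 := h2.mul_left r⁻¹
    apply h3.congr
    intro n
    simp only [Function.comp_apply]
    push_cast
    rw [pow_succ]
    field_simp

lemma summable_norm_LiC_term (a : ℕ+) (u : Comp) {z : ℂ} (hz : ‖z‖ < 1) :
    Summable fun n : ℕ => ‖z ^ n * ((n : ℂ) ^ (a : ℕ))⁻¹ * Hc u (n - 1)‖ :=
  Summable.of_nonneg_of_le (fun _ => norm_nonneg _) (LiC_term_norm_le a u z)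
    (summable_aux (norm_nonneg z) hz u.length)

lemma hasSum_Hc_mul {z : ℂ} (hz : ‖z‖ < 1) (s : Comp) :
    HasSum (fun N : ℕ => Hc s N * z ^ N) (LiC s z / (1 - z)) := by
  cases s with
  | nil =>
    have h := hasSum_geometric_of_norm_lt_one hz
    simp only [Hc, LiC, one_mul]
    rw [div_eq_mul_inv, one_mul]
    simpa using h
  | cons a u =>
    have hf := summable_norm_LiC_term a u hz
    have hg : Summable fun n : ℕ => ‖z ^ n‖ := by
      simpa [norm_pow] using
        (summable_geometric_of_lt_one (norm_nonneg z) hz)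
    have hsum := (summable_norm_sum_mul_range_of_summable_norm hf hg).of_norm
    have key := tsum_mul_tsum_eq_tsum_sum_range_of_summable_norm hf hg
    have hterm : ∀ N : ℕ, (∑ k ∈ Finset.range (N+1),
        (z ^ k * ((k : ℂ) ^ (a : ℕ))⁻¹ * Hc u (k - 1)) * z ^ (N - k)) = Hc (a :: u) N * z ^ N := by
      intro N
      have h1 : ∀ k ∈ Finset.range (N+1),
          (z ^ k * ((k : ℂ) ^ (a : ℕ))⁻¹ * Hc u (k - 1)) * z ^ (N - k)
          = (((k : ℂ) ^ (a : ℕ))⁻¹ * Hc u (k - 1)) * z ^ N := by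
        intro k hk
        rw [Finset.mem_range, Nat.lt_succ_iff] at hk
        have hzz : z ^ k * z ^ (N - k) = z ^ N := by
          rw [← pow_add, Nat.add_sub_cancel' hk]
        linear_combination (((k : ℂ) ^ (a : ℕ))⁻¹ * Hc u (k - 1)) * hzz
      rw [Finset.sum_congr rfl h1, ← Finset.sum_mul]
      congr 1
      show _ = Hc (a :: u) N
      rw [Hc]
      symm
      apply Finset.sum_subset
      · intro k hk
        rw [Finset.mem_Icc] at hk
        rw [Finset.mem_range]
        omega
      · intro k hk1 hk2
        rw [Finset.mem_range] at hk1
        rw [Finset.mem_Icc] at hk2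
        have : k = 0 := by omega
        subst this
        have h0 : ((0 : ℕ) : ℂ) ^ (a : ℕ) = 0 := by
          rw [Nat.cast_zero]; exact zero_pow a.ne_zero
        simp [h0]
    have hsum' := hsum
    rw [funext hterm] at hsum'
    have := hsum'.hasSum
    rw [← funext hterm, ← key] at this
    have htg : ∑' n : ℕ, z ^ n = (1 - z)⁻¹ := tsum_geometric_of_norm_lt_one hz
    rw [htg] at this
    rw [funext hterm] at this
    show HasSum _ ((∑' n : ℕ, z ^ n * ((n : ℂ) ^ (a : ℕ))⁻¹ * Hc u (n - 1)) / (1 - z))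
    rwa [div_eq_mul_inv]

lemma wt_cons (a : ℕ+) (u : Comp) : wt (a :: u) = (a : ℕ) + wt u := rfl

lemma wt_eq_sum_map (s : Comp) : wt s = (s.map (fun p : ℕ+ => (p : ℕ))).sum := by
  induction s with
  | nil => rfl
  | cons a u ih => rw [wt_cons, List.map_cons, List.sum_cons, ih]

def toCompositionFun (n : ℕ) (s : {s : Comp // wt s = n}) : Composition n where
  blocks := (s : Comp).map (fun p : ℕ+ => (p : ℕ))
  blocks_pos := by
    intro i hi
    simp only [List.mem_map] at hi
    obtain ⟨p, _, rfl⟩ := hi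
    exact p.pos
  blocks_sum := by rw [← wt_eq_sum_map]; exact s.2

lemma finite_wt (n : ℕ) : {s : Comp | wt s = n}.Finite := by
  have hinj : Function.Injective (toCompositionFun n) := by
    intro s t h
    have hb := congrArg Composition.blocks h
    simp only [toCompositionFun] at hb
    exact Subtype.ext (List.map_injective_iff.2 (fun a b hab => PNat.coe_injective hab) hb)
  have : Finite {s : Comp // wt s = n} := Finite.of_injective _ hinj
  have : Finite {s : Comp | wt s = n} := this
  exact Set.toFinite _

noncomputable def Fn (n : ℕ) : Finset Comp := (finite_wt n).toFinset

lemma LiP_homog_eq (α : Comp → ℂ) (n : ℕ) (z : ℂ) :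
    LiP (homog α n) z = ∑ s ∈ Fn n, homog α n s * LiC s z := by
  rw [LiP]
  apply tsum_eq_sum
  intro s hs
  rw [Fn, Set.Finite.mem_toFinset] at hs
  simp only [homog, Set.mem_setOf_eq] at hs ⊢
  rw [if_neg hs, zero_mul]

lemma HP_homog_eq (α : Comp → ℂ) (n : ℕ) (N : ℕ) :
    HP (homog α n) N = ∑ s ∈ Fn n, homog α n s * Hc s N := by
  rw [HP]
  apply tsum_eq_sum
  intro s hs
  rw [Fn, Set.Finite.mem_toFinset] at hs
  simp only [homog, Set.mem_setOf_eq] at hs ⊢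
  rw [if_neg hs, zero_mul]

lemma hasSum_HP (α : Comp → ℂ) (n : ℕ) {z : ℂ} (hz : ‖z‖ < 1) :
    HasSum (fun N : ℕ => HP (homog α n) N * z ^ N) (LiP (homog α n) z / (1 - z)) := by
  have h := hasSum_sum (s := Fn n)
    (f := fun s N => homog α n s * (Hc s N * z ^ N))
    (a := fun s => homog α n s * (LiC s z / (1 - z)))
    (fun s _ => (hasSum_Hc_mul hz s).mul_left (homog α n s))
  have h1 : (fun N : ℕ => ∑ s ∈ Fn n, homog α n s * (Hc s N * z ^ N))
      = fun N : ℕ => HP (homog α n) N * z ^ N := by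
    funext N
    rw [HP_homog_eq, Finset.sum_mul]
    exact Finset.sum_congr rfl fun s _ => by ring
  have h2 : (∑ s ∈ Fn n, homog α n s * (LiC s z / (1 - z)))
      = LiP (homog α n) z / (1 - z) := by
    rw [LiP_homog_eq, Finset.sum_div]
    exact Finset.sum_congr rfl fun s _ => by ring
  rw [h1, h2] at h
  exact h

lemma hasFPowerSeriesOnBall_ofScalars {c : ℕ → ℂ} {g : ℂ → ℂ} {ρ : ℝ} (hρ : 0 < ρ)
    (hs : ∀ z : ℂ, ‖z‖ < ρ → HasSum (fun N : ℕ => c N * z ^ N) (g z)) :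
    HasFPowerSeriesOnBall g (FormalMultilinearSeries.ofScalars ℂ c) 0 (ENNReal.ofReal ρ) := by
  constructor
  · apply ENNReal.le_of_forall_nnreal_lt
    intro t ht
    have ht' : (t : ℝ) < ρ := by
      rwa [← ENNReal.ofReal_coe_nnreal, ENNReal.ofReal_lt_ofReal_iff hρ] at ht
    have hn : ‖((t : ℝ) : ℂ)‖ = (t : ℝ) := by
      simp [Real.norm_of_nonneg t.2]
    have hsum := (hs ((t : ℝ) : ℂ) (by rwa [hn])).summable
    have htend := hsum.tendsto_atTop_zero.norm
    apply FormalMultilinearSeries.le_radius_of_tendsto (l := ‖(0:ℂ)‖)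
    have heq : (fun n : ℕ => ‖FormalMultilinearSeries.ofScalars ℂ c n‖ * (t:ℝ) ^ n)
        = fun n : ℕ => ‖c n * ((t : ℝ) : ℂ) ^ n‖ := by
      funext n
      rw [FormalMultilinearSeries.ofScalars_norm, norm_mul, norm_pow, hn]
    rw [heq]
    exact htend
  · exact ENNReal.ofReal_pos.mpr hρ
  · intro y hy
    rw [EMetric.mem_ball, edist_zero_right] at hy
    have hy' : ‖y‖ < ρ := by
      rw [← ENNReal.ofReal_lt_ofReal_iff hρ, ofReal_norm]
      exact hy
    have := hs y hy'
    simp only [FormalMultilinearSeries.ofScalars_apply_eq, smul_eq_mul, zero_add]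
    exact this

lemma coeff_unique {c d : ℕ → ℂ} {g : ℂ → ℂ} {ρ : ℝ} (hρ : 0 < ρ)
    (hc : ∀ z : ℂ, ‖z‖ < ρ → HasSum (fun N : ℕ => c N * z ^ N) (g z))
    (hd : ∀ z : ℂ, ‖z‖ < ρ → HasSum (fun N : ℕ => d N * z ^ N) (g z)) : c = d := by
  have h1 := (hasFPowerSeriesOnBall_ofScalars hρ hc).hasFPowerSeriesAt
  have h2 := (hasFPowerSeriesOnBall_ofScalars hρ hd).hasFPowerSeriesAt
  exact FormalMultilinearSeries.ofScalars_series_injective ℂ ℂ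
    (h1.eq_formalMultilinearSeries h2)

lemma coeff_bound {c : ℕ → ℂ} {g : ℂ → ℂ} {ρ r' : ℝ} (h0 : 0 < r') (hr : r' < ρ)
    (hs : ∀ z : ℂ, ‖z‖ < ρ → HasSum (fun N : ℕ => c N * z ^ N) (g z))
    {M : ℝ} (hM : ∀ z : ℂ, ‖z‖ ≤ r' → ‖g z‖ ≤ M) (N : ℕ) :
    ‖c N‖ * r' ^ N ≤ M := by
  have hρ : 0 < ρ := h0.trans hr
  have hb := hasFPowerSeriesOnBall_ofScalars hρ hs
  set R' : ℝ≥0 := ⟨r', h0.le⟩ with hR'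
  have hR'coe : (R' : ℝ) = r' := rfl
  have hsub : Metric.closedBall (0:ℂ) (R' : ℝ) ⊆ Metric.eball (0:ℂ) (ENNReal.ofReal ρ) := by
    intro x hx
    rw [Metric.mem_closedBall, dist_zero_right, hR'coe] at hx
    rw [EMetric.mem_ball, edist_zero_right, ← ofReal_norm]
    exact (ENNReal.ofReal_lt_ofReal_iff hρ).mpr (lt_of_le_of_lt hx hr)
  have hdiff : DifferentiableOn ℂ g (Metric.closedBall (0:ℂ) (R' : ℝ)) :=
    hb.differentiableOn.mono hsub
  have hR'pos : 0 < R' := h0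
  have h2 := hdiff.hasFPowerSeriesOnBall hR'pos
  have heq : FormalMultilinearSeries.ofScalars ℂ c = cauchyPowerSeries g 0 (R' : ℝ) :=
    hb.hasFPowerSeriesAt.eq_formalMultilinearSeries h2.hasFPowerSeriesAt
  have h3 := norm_cauchyPowerSeries_le g 0 (R' : ℝ) N
  rw [← heq, FormalMultilinearSeries.ofScalars_norm] at h3
  -- bound integral
  have hcont : Continuous fun θ : ℝ => ‖g (circleMap 0 (R' : ℝ) θ)‖ := by
    apply Continuous.norm
    apply ContinuousOn.comp_continuous hdiff.continuousOn (continuous_circleMap 0 (R' : ℝ))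
    intro θ
    rw [Metric.mem_closedBall, dist_zero_right]
    rw [show ‖circleMap 0 (R':ℝ) θ‖ = |(R':ℝ)| from by
      simpa using abs_circleMap_zero (R':ℝ) θ]
    rw [abs_of_nonneg (by rw [hR'coe]; exact h0.le)]
  have hMnn : 0 ≤ M := le_trans (norm_nonneg (g 0)) (hM 0 (by simp [h0.le]))
  have hint : (∫ θ in (0:ℝ)..2*π, ‖g (circleMap 0 (R':ℝ) θ)‖) ≤ 2*π*M := by
    have hle : ∀ θ ∈ Set.Icc (0:ℝ) (2*π), ‖g (circleMap 0 (R':ℝ) θ)‖ ≤ M := by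
      intro θ _
      apply hM
      rw [show ‖circleMap 0 (R':ℝ) θ‖ = |(R':ℝ)| from by
        simpa using abs_circleMap_zero (R':ℝ) θ]
      rw [abs_of_nonneg (by rw [hR'coe]; exact h0.le), hR'coe]
    calc (∫ θ in (0:ℝ)..2*π, ‖g (circleMap 0 (R':ℝ) θ)‖)
        ≤ ∫ _ in (0:ℝ)..2*π, M := by
          apply intervalIntegral.integral_mono_on Real.two_pi_pos.le
            (hcont.intervalIntegrable _ _) (intervalIntegrable_const) hle
      _ = 2*π*M := by rw [intervalIntegral.integral_const, smul_eq_mul]; ring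
  have h4 : ‖c N‖ * r' ^ N ≤ ((2*π)⁻¹ * (2*π*M)) * (|(R':ℝ)|⁻¹ ^ N * r' ^ N) := by
    have := mul_le_mul_of_nonneg_right h3 (pow_nonneg h0.le N)
    refine this.trans ?_
    rw [mul_assoc]
    apply mul_le_mul_of_nonneg_right _ (by positivity)
    exact mul_le_mul_of_nonneg_left hint (by positivity)
  have h5 : |(R':ℝ)|⁻¹ ^ N * r' ^ N = 1 := by
    rw [abs_of_nonneg (by rw [hR'coe]; exact h0.le), hR'coe, ← mul_pow,
      inv_mul_cancel₀ h0.ne', one_pow]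
  rw [h5, mul_one] at h4
  calc ‖c N‖ * r' ^ N ≤ (2*π)⁻¹ * (2*π*M) := h4
    _ = M := by field_simp


/-- Let `0 < R ≤ 1`, `α ∈ Dom_R`, and let `Hα` be the Taylor coefficients of
`Li_α(z)/(1−z)` at `0`.  Then `Σ_{n,N} |H_{α,n}(N)|·r^N < ∞` for every
`r ∈ (0,R)`; in particular, for every `N`, `Σ_n H_{α,n}(N)` converges absolutely
with sum `Hα N`. -/
theorem harmonic_components_abs_summable (R : ℝ) (hR0 : 0 < R) (hR1 : R ≤ 1)
    (α : Comp → ℂ) (hα : α ∈ DomR R) (Hα : ℕ → ℂ)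
    (hHα : ∀ z : ℂ, ‖z‖ < R →
      HasSum (fun N : ℕ => Hα N * z ^ N)
        ((∑' n : ℕ, LiP (homog α n) z) / (1 - z))) :
    (∀ r : ℝ, 0 < r → r < R →
      Summable fun p : ℕ × ℕ => ‖HP (homog α p.1) p.2‖ * r ^ p.2) ∧
    ∀ N : ℕ, (Summable fun n : ℕ => ‖HP (homog α n) N‖) ∧
      ∑' n : ℕ, HP (homog α n) N = Hα N := by
  -- sup bounds
  have hMle0 : ∀ r : ℝ, 0 < r → r < R → ∀ n : ℕ, ∀ z : ℂ, ‖z‖ ≤ r →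
      ‖LiP (homog α n) z‖ ≤ ((⨆ z ∈ Metric.closedBall (0 : ℂ) r,
        (‖LiP (homog α n) z‖₊ : ℝ≥0∞)).toReal) := by
    intro r hr0 hrR n z hz
    have hne : (⨆ z ∈ Metric.closedBall (0 : ℂ) r, (‖LiP (homog α n) z‖₊ : ℝ≥0∞)) ≠ ⊤ :=
      ne_top_of_le_ne_top (hα r hr0 hrR).ne (ENNReal.le_tsum n)
    have h1 : (‖LiP (homog α n) z‖₊ : ℝ≥0∞) ≤
        ⨆ z ∈ Metric.closedBall (0 : ℂ) r, (‖LiP (homog α n) z‖₊ : ℝ≥0∞) := by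
      apply le_iSup₂ (f := fun (z : ℂ) (_ : z ∈ Metric.closedBall (0:ℂ) r) =>
        (‖LiP (homog α n) z‖₊ : ℝ≥0∞)) z
      rwa [Metric.mem_closedBall, dist_zero_right]
    have := ENNReal.toReal_mono hne h1
    simpa using this
  -- key part 1
  have key : ∀ r : ℝ, 0 < r → r < R →
      Summable fun p : ℕ × ℕ => ‖HP (homog α p.1) p.2‖ * r ^ p.2 := by
    intro r hr0 hrR
    set r' : ℝ := (r + R) / 2 with hr'def
    have hr'0 : 0 < r' := by positivity
    have hrr' : r < r' := by rw [hr'def]; linarith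
    have hr'R : r' < R := by rw [hr'def]; linarith
    have hr'1 : r' < 1 := lt_of_lt_of_le hr'R hR1
    set M : ℕ → ℝ := fun n => ((⨆ z ∈ Metric.closedBall (0 : ℂ) r',
      (‖LiP (homog α n) z‖₊ : ℝ≥0∞)).toReal) with hMdef
    have hMsum : Summable M := ENNReal.summable_toReal (hα r' hr'0 hr'R).ne
    have hM0 : ∀ n, 0 ≤ M n := fun n => ENNReal.toReal_nonneg
    have hcb : ∀ n N, ‖HP (homog α n) N‖ * r' ^ N ≤ M n / (1 - r') := by
      intro n N
      apply coeff_bound hr'0 hr'R (g := fun z => LiP (homog α n) z / (1 - z))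
      · intro z hz
        exact hasSum_HP α n (lt_of_lt_of_le hz hR1)
      · intro z hz
        have h1 : ‖LiP (homog α n) z‖ ≤ M n := hMle0 r' hr'0 hr'R n z hz
        have h2 : 1 - r' ≤ ‖1 - z‖ := by
          have := norm_sub_norm_le (1 : ℂ) z
          rw [norm_one] at this
          linarith
        rw [norm_div]
        exact div_le_div₀ (hM0 n) h1 (by linarith) h2
    have hgeo : Summable fun N : ℕ => (r / r') ^ N :=
      summable_geometric_of_lt_one (by positivity) (by rw [div_lt_one hr'0]; exact hrr')
    have hprod := (hMsum.div_const (1 - r')).mul_of_nonneg hgeo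
      (fun n => div_nonneg (hM0 n) (by linarith))
      (fun N => by positivity)
    apply Summable.of_nonneg_of_le (fun p => by positivity) _ hprod
    intro p
    have h1 := hcb p.1 p.2
    have hrr : r' * (r / r') = r := by
      rw [mul_div_assoc']
      exact mul_div_cancel_left₀ _ hr'0.ne'
    have hpow : r ^ p.2 = r' ^ p.2 * (r / r') ^ p.2 := by rw [← mul_pow, hrr]
    have h2 : ‖HP (homog α p.1) p.2‖ * r ^ p.2
        = (‖HP (homog α p.1) p.2‖ * r' ^ p.2) * (r / r') ^ p.2 := by
      rw [hpow, mul_assoc]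
    rw [h2]
    exact mul_le_mul_of_nonneg_right h1 (by positivity)
  refine ⟨key, ?_⟩
  -- summability in n for each N
  have hsummN : ∀ N : ℕ, Summable fun n : ℕ => ‖HP (homog α n) N‖ := by
    intro N
    have h1 := (key (R/2) (by linarith) (by linarith)).comp_injective
      (i := fun n : ℕ => ((n, N) : ℕ × ℕ))
      (fun a b h => by simpa using congrArg Prod.fst h)
    have h2 := h1.mul_right ((R/2) ^ N)⁻¹
    apply h2.congr
    intro n
    simp only [Function.comp_apply]
    rw [mul_assoc, mul_inv_cancel₀ (pow_ne_zero _ (by positivity : (0:ℝ) < R/2).ne'), mul_one]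
  -- identification of the sum
  have hc : ∀ z : ℂ, ‖z‖ < R →
      HasSum (fun N : ℕ => (∑' n : ℕ, HP (homog α n) N) * z ^ N)
        ((∑' n : ℕ, LiP (homog α n) z) / (1 - z)) := by
    intro z hz
    have hz1 : ‖z‖ < 1 := lt_of_lt_of_le hz hR1
    have hz1' : (1 : ℂ) - z ≠ 0 := by
      intro h
      have : z = 1 := by linear_combination -h
      rw [this] at hz1; simp at hz1
    set r : ℝ := (‖z‖ + R) / 2 with hrdef
    have hr0 : 0 < r := by positivity
    have hzr : ‖z‖ ≤ r := by rw [hrdef]; linarith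
    have hrR : r < R := by rw [hrdef]; linarith
    have hFs : Summable fun p : ℕ × ℕ => ‖HP (homog α p.1) p.2 * z ^ p.2‖ := by
      apply Summable.of_nonneg_of_le (fun p => norm_nonneg _) _ (key r hr0 hrR)
      intro p
      rw [norm_mul, norm_pow]
      exact mul_le_mul_of_nonneg_left (pow_le_pow_left₀ (norm_nonneg z) hzr p.2)
        (norm_nonneg _)
    have hF := hFs.of_norm.hasSum
    -- fiberwise over n
    have h1 : HasSum (fun n : ℕ => LiP (homog α n) z / (1 - z))
        (∑' p : ℕ × ℕ, HP (homog α p.1) p.2 * z ^ p.2) :=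
      hF.prod_fiberwise (fun n => hasSum_HP α n hz1)
    -- swapped
    have hsw : HasSum ((fun p : ℕ × ℕ => HP (homog α p.1) p.2 * z ^ p.2) ∘
        (Equiv.prodComm ℕ ℕ)) (∑' p : ℕ × ℕ, HP (homog α p.1) p.2 * z ^ p.2) :=
      ((Equiv.prodComm ℕ ℕ).hasSum_iff).mpr hF
    have hfib : ∀ N : ℕ, HasSum (fun n : ℕ => HP (homog α n) N * z ^ N)
        ((∑' n : ℕ, HP (homog α n) N) * z ^ N) :=
      fun N => ((hsummN N).of_norm.hasSum).mul_right _
    have h2 : HasSum (fun N : ℕ => (∑' n : ℕ, HP (homog α n) N) * z ^ N)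
        (∑' p : ℕ × ℕ, HP (homog α p.1) p.2 * z ^ p.2) :=
      hsw.prod_fiberwise (fun N => hfib N)
    -- identify total
    have h3 : HasSum (fun n : ℕ => LiP (homog α n) z)
        ((∑' p : ℕ × ℕ, HP (homog α p.1) p.2 * z ^ p.2) * (1 - z)) := by
      have := h1.mul_right (1 - z)
      apply this.congr
      intro n
      field_simp
    have h4 : (∑' n : ℕ, LiP (homog α n) z)
        = (∑' p : ℕ × ℕ, HP (homog α p.1) p.2 * z ^ p.2) * (1 - z) := h3.tsum_eq
    rw [h4, mul_div_cancel_right₀ _ hz1']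
    exact h2
  have hfinal : (fun N : ℕ => ∑' n : ℕ, HP (homog α n) N) = Hα :=
    coeff_unique hR0 hc hHα
  exact fun N => ⟨hsummN N, congrFun hfinal N⟩
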